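/- arXiv:2308.04237 — 2 statements merged into one kernel-verified Lean document; each statement's English description precedes it below -/
import Mathlib

section
/- Let s_1,...,s_{N+1} be exchangeable real-valued random variables (e.g., i.i.d.). Let Q be the ceil((1-alpha)(N+1))-th smallest value among s_1,...,s_N if alpha >= 1/(N+1), and Q = +infinity (or the maximum possible score) otherwise. Then Pr(s_{N+1} <= Q) >= 1 - alpha. -/
open MeasureTheory
open scoped ENNReal


open Finset

/-- In a sorted list, if at most `m` entries are `< x`, then `x ≤ L[m]`. -/
lemma le_getElem_of_countP_le {L : List ℝ} (hL : L.Pairwise (· ≤ ·)) {m : ℕ} (hm : m < L.length)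
    {x : ℝ} (h : L.countP (fun y => decide (y < x)) ≤ m) : x ≤ L[m] := by
  by_contra hx
  push_neg at hx
  have htake : ∀ a ∈ L.take (m + 1), (fun y => decide (y < x)) a = true := by
    intro a ha
    obtain ⟨i, hi, rfl⟩ := List.mem_iff_getElem.mp ha
    rw [List.getElem_take]
    rw [List.length_take] at hi
    have hi' : i < L.length := lt_of_lt_of_le hi (min_le_right _ _)
    have him : i ≤ m := by
      have := lt_of_lt_of_le hi (min_le_left _ _); omega
    have hle : L[i] ≤ L[m] := by
      rcases eq_or_lt_of_le him with h' | h'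
      · subst h'; exact le_refl _
      · exact hL.rel_get_of_lt (by simpa using h')
    simpa using lt_of_le_of_lt hle hx
  have hcount : (L.take (m + 1)).countP (fun y => decide (y < x)) = m + 1 := by
    rw [List.countP_eq_length.mpr htake, List.length_take]
    omega
  have : m + 1 ≤ L.countP (fun y => decide (y < x)) := by
    conv_rhs => rw [← List.take_append_drop (m + 1) L]
    rw [List.countP_append, hcount]
    omega
  omega

/-- At least `k` of the `n` values have strict rank `< k`. -/
lemma rank_count_ge {n : ℕ} (v : Fin n → ℝ) {k : ℕ} (hk : k ≤ n) :
    k ≤ (univ.filter fun j => (univ.filter fun i => v i < v j).card < k).card := by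
  rcases Nat.eq_zero_or_pos k with rfl | hk0
  · simp
  set τ := Tuple.sort v with hτ
  have hmono : Monotone (v ∘ τ) := Tuple.monotone_sort v
  have hinj : Function.Injective (fun l : Fin k => τ (Fin.castLE hk l)) :=
    fun a b hab => by
      have := τ.injective hab
      exact Fin.castLE_injective hk this
  have hsub : Finset.image (fun l : Fin k => τ (Fin.castLE hk l)) univ ⊆
      univ.filter fun j => (univ.filter fun i => v i < v j).card < k := by
    intro j hj
    obtain ⟨l, -, rfl⟩ := Finset.mem_image.mp hj
    refine Finset.mem_filter.mpr ⟨Finset.mem_univ _, ?_⟩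
    have hcard : (univ.filter fun i => v i < v (τ (Fin.castLE hk l))).card ≤ (l : ℕ) := by
      have := Finset.card_le_card_of_injOn (fun i => ((τ.symm i : Fin n) : ℕ))
        (s := univ.filter fun i => v i < v (τ (Fin.castLE hk l)))
        (t := Finset.range (l : ℕ))
        (by
          intro i hi
          rw [Finset.mem_coe, Finset.mem_filter] at hi
          rw [Finset.mem_coe, Finset.mem_range]
          by_contra hcon
          push_neg at hcon
          have hle : Fin.castLE hk l ≤ τ.symm i := by
            rw [Fin.le_def]; simpa using hcon
          have := hmono hle
          simp only [Function.comp_apply, Equiv.apply_symm_apply] at this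
          exact absurd hi.2 (not_lt.mpr this))
        (by
          intro a _ b _ hab
          exact τ.symm.injective (Fin.val_injective hab))
      simpa using this
    exact lt_of_le_of_lt hcard l.isLt
  calc k = (Finset.image (fun l : Fin k => τ (Fin.castLE hk l)) univ).card := by
        rw [Finset.card_image_of_injective _ hinj, Finset.card_univ, Fintype.card_fin]
    _ ≤ _ := Finset.card_le_card hsub


/-- Split conformal prediction coverage guarantee: for exchangeable scores
`s 0, …, s N`, the probability that the test score `s N` is at most the
`⌈(1-α)(N+1)⌉`-th smallest of the calibration scores `s 0, …, s (N-1)` (taken to be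
`+∞` when `α < 1/(N+1)`) is at least `1 - α`. -/
theorem conformal_coverage {Ω : Type*} [MeasurableSpace Ω] (μ : Measure Ω)
    [IsProbabilityMeasure μ] (N : ℕ) (α : ℝ) (hα : 0 ≤ α)
    (s : Fin (N + 1) → Ω → ℝ) (hmeas : ∀ i, Measurable (s i))
    (hexch : ∀ σ : Equiv.Perm (Fin (N + 1)),
      μ.map (fun ω => fun i => s (σ i) ω) = μ.map (fun ω => fun i => s i ω)) :
    ENNReal.ofReal (1 - α) ≤
      μ {ω | (↑(s (Fin.last N) ω) : EReal) ≤
        (if 1 / ((N : ℝ) + 1) ≤ α then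
          ((((Finset.univ.val.map (fun i : Fin N => s i.castSucc ω)).sort (· ≤ ·)).getD
            ((⌈(1 - α) * ((N : ℝ) + 1)⌉).toNat - 1) 0 : ℝ) : EReal)
        else (⊤ : EReal))} := by
  rcases le_or_gt 1 α with h1 | h1
  · rw [ENNReal.ofReal_eq_zero.mpr (by linarith)]
    exact zero_le
  by_cases hcase : 1 / ((N : ℝ) + 1) ≤ α
  swap
  · simp only [if_neg hcase]
    have huniv : {ω | (↑(s (Fin.last N) ω) : EReal) ≤ (⊤ : EReal)} = Set.univ := by
      ext ω; simp
    rw [huniv, measure_univ]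
    exact ENNReal.ofReal_le_one.mpr (by linarith)
  simp only [if_pos hcase]
  -- basic numeric facts
  have hNpos : (0 : ℝ) < (N : ℝ) + 1 := by positivity
  set k : ℕ := (⌈(1 - α) * ((N : ℝ) + 1)⌉).toNat with hkdef
  have hceilpos : 0 < ⌈(1 - α) * ((N : ℝ) + 1)⌉ :=
    Int.ceil_pos.mpr (by nlinarith)
  have hk1 : 1 ≤ k := by
    rw [hkdef]; omega
  have hkR : (1 - α) * ((N : ℝ) + 1) ≤ (k : ℝ) := by
    have h := Int.le_ceil ((1 - α) * ((N : ℝ) + 1))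
    have : ((⌈(1 - α) * ((N : ℝ) + 1)⌉.toNat : ℤ) : ℝ) = ((⌈(1 - α) * ((N : ℝ) + 1)⌉ : ℤ) : ℝ) := by
      exact_mod_cast congrArg Int.cast (Int.toNat_of_nonneg hceilpos.le)
    rw [hkdef]
    push_cast at this ⊢
    linarith
  have hα1 : 1 ≤ α * ((N : ℝ) + 1) := by
    rw [div_le_iff₀ hNpos] at hcase; linarith
  have hkN : k ≤ N := by
    have hle : ⌈(1 - α) * ((N : ℝ) + 1)⌉ ≤ (N : ℤ) := by
      apply Int.ceil_le.mpr
      push_cast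
      nlinarith
    rw [hkdef]
    omega
  -- the random vector and the rank events
  set F : Ω → (Fin (N + 1) → ℝ) := fun ω i => s i ω with hFdef
  have hF : Measurable F := measurable_pi_lambda _ hmeas
  set B : Fin (N + 1) → Set (Fin (N + 1) → ℝ) :=
    fun j => {v | (univ.filter fun i => v i < v j).card < k} with hBdef
  have hB : ∀ j, MeasurableSet (B j) := by
    intro j
    have hcardmeas : Measurable fun v : Fin (N + 1) → ℝ =>
        (univ.filter fun i => v i < v j).card := by
      simp only [Finset.card_filter]
      apply Finset.measurable_sum
      intro i _
      exact Measurable.ite (measurableSet_lt (measurable_pi_apply i) (measurable_pi_apply j))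
        measurable_const measurable_const
    exact hcardmeas (MeasurableSet.of_discrete (s := Set.Iio k))
  have hAmeas : ∀ j, MeasurableSet (F ⁻¹' B j) := fun j => hF (hB j)
  -- exchangeability: all events have the same probability
  have hsame : ∀ j, μ (F ⁻¹' B j) = μ (F ⁻¹' B (Fin.last N)) := by
    intro j
    set σ : Equiv.Perm (Fin (N + 1)) := Equiv.swap j (Fin.last N) with hσdef
    have hσlast : σ (Fin.last N) = j := Equiv.swap_apply_right _ _
    set g : (Fin (N + 1) → ℝ) → (Fin (N + 1) → ℝ) := fun v i => v (σ i) with hgdef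
    have hg : Measurable g := measurable_pi_lambda _ fun i => measurable_pi_apply (σ i)
    have hcard : ∀ v : Fin (N + 1) → ℝ, ∀ c : ℝ,
        (univ.filter fun i => v (σ i) < c).card = (univ.filter fun i => v i < c).card := by
      intro v c
      apply Finset.card_bij (fun i _ => σ i)
      · intro a ha; simp only [Finset.mem_filter] at ha ⊢; exact ⟨Finset.mem_univ _, ha.2⟩
      · intro a _ b _ h; exact σ.injective h
      · intro b hb
        refine ⟨σ.symm b, ?_, by simp⟩
        simp only [Finset.mem_filter] at hb ⊢
        exact ⟨Finset.mem_univ _, by simpa using hb.2⟩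
    have hBj : B j = g ⁻¹' B (Fin.last N) := by
      ext v
      simp only [hBdef, Set.mem_setOf_eq, Set.mem_preimage, hgdef]
      rw [hcard v (v (σ (Fin.last N))), hσlast]
    calc μ (F ⁻¹' B j) = μ.map F (B j) := (Measure.map_apply hF (hB j)).symm
      _ = μ ((g ∘ F) ⁻¹' B (Fin.last N)) := by
          rw [Measure.map_apply hF (hB j), hBj, Set.preimage_comp]
      _ = μ.map (g ∘ F) (B (Fin.last N)) := (Measure.map_apply (hg.comp hF) (hB _)).symm
      _ = μ.map (fun ω => fun i => s (σ i) ω) (B (Fin.last N)) := rfl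
      _ = μ.map F (B (Fin.last N)) := by rw [hexch σ]
      _ = μ (F ⁻¹' B (Fin.last N)) := Measure.map_apply hF (hB _)
  -- pointwise: at least k of the events hold
  have hpoint : ∀ ω, (k : ℝ≥0∞) ≤ ∑ j : Fin (N + 1), (F ⁻¹' B j).indicator (fun _ => 1) ω := by
    intro ω
    have hrank := rank_count_ge (F ω) (k := k) (le_trans hkN (Nat.le_succ N))
    calc (k : ℝ≥0∞) ≤ ((univ.filter fun j : Fin (N + 1) =>
          (univ.filter fun i => F ω i < F ω j).card < k).card : ℝ≥0∞) := by
            exact_mod_cast hrank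
      _ = ∑ j : Fin (N + 1), (F ⁻¹' B j).indicator (fun _ => 1) ω := by
            rw [← Finset.sum_boole]
            apply Finset.sum_congr rfl
            intro j _
            by_cases hj : ω ∈ F ⁻¹' B j
            · rw [Set.indicator_of_mem hj]
              simp only [Set.mem_preimage, hBdef, Set.mem_setOf_eq] at hj
              rw [if_pos hj]
            · rw [Set.indicator_of_notMem hj]
              simp only [Set.mem_preimage, hBdef, Set.mem_setOf_eq] at hj
              rw [if_neg hj]
  -- integrate: k ≤ (N+1) * μ (A last)
  have hint : (k : ℝ≥0∞) ≤ ((N : ℝ≥0∞) + 1) * μ (F ⁻¹' B (Fin.last N)) := by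
    have h1 : (k : ℝ≥0∞) = ∫⁻ _, (k : ℝ≥0∞) ∂μ := by simp
    have h2 : (∫⁻ ω, (k : ℝ≥0∞) ∂μ) ≤
        ∫⁻ ω, ∑ j : Fin (N + 1), (F ⁻¹' B j).indicator (fun _ => 1) ω ∂μ :=
      lintegral_mono hpoint
    have h3 : (∫⁻ ω, ∑ j : Fin (N + 1), (F ⁻¹' B j).indicator (fun _ => 1) ω ∂μ) =
        ∑ j : Fin (N + 1), μ (F ⁻¹' B j) := by
      rw [lintegral_finset_sum]
      · exact Finset.sum_congr rfl fun j _ => lintegral_indicator_one (hAmeas j)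
      · exact fun j _ => (measurable_const.indicator (hAmeas j))
    have h4 : ∑ j : Fin (N + 1), μ (F ⁻¹' B j) =
        ((N : ℝ≥0∞) + 1) * μ (F ⁻¹' B (Fin.last N)) := by
      rw [Finset.sum_congr rfl fun j _ => hsame j, Finset.sum_const, Finset.card_univ,
        Fintype.card_fin, nsmul_eq_mul]
      push_cast
      ring
    rw [h1]
    rw [h3, h4] at h2
    exact h2
  -- the event is contained in the target set
  have hsub : F ⁻¹' B (Fin.last N) ⊆ {ω | (↑(s (Fin.last N) ω) : EReal) ≤
      ((((Finset.univ.val.map (fun i : Fin N => s i.castSucc ω)).sort (· ≤ ·)).getD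
        ((⌈(1 - α) * ((N : ℝ) + 1)⌉).toNat - 1) 0 : ℝ) : EReal)} := by
    intro ω hω
    simp only [Set.mem_preimage, hBdef, Set.mem_setOf_eq, hFdef] at hω
    set x := s (Fin.last N) ω with hxdef
    set L := ((Finset.univ.val.map (fun i : Fin N => s i.castSucc ω)).sort (· ≤ ·)) with hLdef
    have hLlen : L.length = N := by
      rw [hLdef]
      rw [Multiset.length_sort, Multiset.card_map]
      simp
    have hsorted : L.Pairwise (· ≤ ·) := Multiset.pairwise_sort _ _
    -- the count over Fin (N+1) equals the count over the calibration list
    have hcount1 : (univ.filter fun i : Fin (N + 1) => s i ω < x).card =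
        (univ.filter fun i : Fin N => s i.castSucc ω < x).card := by
      rw [Fin.univ_castSuccEmb, Finset.filter_cons, if_neg (by rw [← hxdef]; exact lt_irrefl x),
        Finset.filter_map, Finset.card_map]
      rfl
    have hcount2 : L.countP (fun y => decide (y < x)) =
        (univ.filter fun i : Fin N => s i.castSucc ω < x).card := by
      have : (Multiset.countP (fun y => y < x)
          (Finset.univ.val.map (fun i : Fin N => s i.castSucc ω))) =
          L.countP (fun y => decide (y < x)) := by
        rw [hLdef, ← Multiset.coe_countP (p := fun y => y < x)]
        rw [Multiset.sort_eq]
      rw [← this, Multiset.countP_map]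
      rfl
    have hm : k - 1 < L.length := by rw [hLlen]; omega
    have hω' : (univ.filter fun i : Fin (N + 1) => s i ω < x).card < k := hω
    have hcountle : L.countP (fun y => decide (y < x)) ≤ k - 1 := by
      rw [hcount2, ← hcount1]
      omega
    have hle : x ≤ L[k - 1] := le_getElem_of_countP_le hsorted hm hcountle
    have hle' : x ≤ L[(⌈(1 - α) * ((N : ℝ) + 1)⌉).toNat - 1]'(by rw [hLlen]; omega) := hle
    show (↑x : EReal) ≤ _
    rw [List.getD_eq_getElem L 0 (by rw [hLlen]; omega)]
    exact EReal.coe_le_coe_iff.mpr hle'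
  -- final arithmetic
  have hmono : μ (F ⁻¹' B (Fin.last N)) ≤ μ _ := measure_mono hsub
  refine le_trans ?_ hmono
  have hc0 : ((N : ℝ≥0∞) + 1) ≠ 0 := by simp
  have hct : ((N : ℝ≥0∞) + 1) ≠ ⊤ := by
    simp [ENNReal.add_eq_top]
  rw [← ENNReal.mul_le_mul_iff_left hc0 hct]
  calc ENNReal.ofReal (1 - α) * ((N : ℝ≥0∞) + 1)
      = ENNReal.ofReal ((1 - α) * ((N : ℝ) + 1)) := by
        rw [ENNReal.ofReal_mul (by linarith)]
        congr 1
        rw [ENNReal.ofReal_add (by positivity) (by norm_num)]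
        simp [ENNReal.ofReal_natCast]
    _ ≤ (k : ℝ≥0∞) := by
        rw [← ENNReal.ofReal_natCast k]
        exact ENNReal.ofReal_le_ofReal hkR
    _ ≤ ((N : ℝ≥0∞) + 1) * μ (F ⁻¹' B (Fin.last N)) := hint
    _ = μ (F ⁻¹' B (Fin.last N)) * ((N : ℝ≥0∞) + 1) := mul_comm _ _
end

section
/- Let S = {s_1,...,s_N} be a multiset of values taken among quantization levels S_1 < S_2 < ... < S_M, and let p_m be the fraction of elements of S equal to S_m. Define p^+ = (N/(N+1)) p + (0,...,0, 1/(N+1)) in R^M. Then the ceil((1-alpha)(N+1))-th smallest element of S (when alpha >= 1/(N+1)) equals S_{m_alpha(p^+)}, where m_alpha(p^+) = min{ m : p^+_1 + ... + p^+_m >= 1 - alpha }. -/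
/-- The `⌈(1-α)(N+1)⌉`-th smallest element of a multiset of `N` quantized scores
(with levels `L 0 < L 1 < … < L (M-1)`) equals `L m_α(p⁺)`, where `p⁺` is the empirical
distribution augmented by one fictitious score at the maximum level, and
`m_α(p⁺) = min { m : p⁺_1 + ⋯ + p⁺_m ≥ 1 - α }`. -/
theorem quantile_eq_empirical_distribution_quantile
    (N M : ℕ) (hN : 0 < N) (hM : 0 < M) (α : ℝ)
    (hα1 : 1 / ((N : ℝ) + 1) ≤ α) (hα2 : α < 1)
    (L : Fin M → ℝ) (hL : StrictMono L) (sc : Fin N → Fin M)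
    (p : Fin M → ℝ)
    (hp : ∀ m, p m = ((Finset.univ.filter (fun i => sc i = m)).card : ℝ) / N)
    (pPlus : Fin M → ℝ)
    (hpPlus : ∀ m, pPlus m = ((N : ℝ) / ((N : ℝ) + 1)) * p m +
      (if (m : ℕ) = M - 1 then 1 / ((N : ℝ) + 1) else 0))
    (mα : Fin M)
    (hmα : IsLeast {m : Fin M |
      1 - α ≤ ∑ i ∈ Finset.univ.filter (· ≤ m), pPlus i} mα) :
    ((Finset.univ.val.map (fun i : Fin N => L (sc i))).sort (· ≤ ·)).getD
      ((⌈(1 - α) * ((N : ℝ) + 1)⌉).toNat - 1) 0 = L mα := by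
  classical
  have hN1 : (0:ℝ) < (N : ℝ) + 1 := by positivity
  have hNpos : (0:ℝ) < (N : ℝ) := by exact_mod_cast hN
  set k : ℕ := (⌈(1 - α) * ((N : ℝ) + 1)⌉).toNat with hkdef
  have hx0 : 0 < (1 - α) * ((N : ℝ) + 1) := by nlinarith
  have hceil_pos : 0 < ⌈(1 - α) * ((N : ℝ) + 1)⌉ := Int.ceil_pos.mpr hx0
  have hk1 : 1 ≤ k := by
    have := Int.toNat_of_nonneg hceil_pos.le
    omega
  have hkN : k ≤ N := by
    have h1 : (1:ℝ) ≤ α * ((N:ℝ)+1) := by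
      have := (div_le_iff₀ hN1).mp hα1
      linarith
    have h2 : (1 - α) * ((N:ℝ)+1) ≤ (N:ℝ) := by nlinarith
    have h3 : (⌈(1 - α) * ((N : ℝ) + 1)⌉ : ℤ) ≤ (N : ℤ) := by
      rw [Int.ceil_le]; exact_mod_cast h2
    exact Int.toNat_le.mpr h3
  -- the last level
  set lst : Fin M := ⟨M - 1, by omega⟩ with hlst
  have hle_lst : ∀ m : Fin M, m ≤ lst := by
    intro m; exact Fin.mk_le_mk.mpr (by omega)
  -- counting function
  set C : Fin M → ℕ := fun m => (Finset.univ.filter (fun i => sc i ≤ m)).card with hC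
  set D : Fin M → ℕ := fun m => C m + (if m = lst then 1 else 0) with hD
  -- sum of p over lower set
  have hsum_p : ∀ m : Fin M,
      ∑ i ∈ Finset.univ.filter (· ≤ m), p i = (C m : ℝ) / N := by
    intro m
    have hcard : C m = ∑ i ∈ Finset.univ.filter (· ≤ m),
        (Finset.univ.filter (fun j => sc j = i)).card := by
      have h := Finset.card_eq_sum_card_fiberwise
        (f := sc) (s := Finset.univ.filter (fun j => sc j ≤ m))
        (t := Finset.univ.filter (· ≤ m))
        (fun x hx => by
          simp only [Finset.coe_filter, Finset.mem_filter, Finset.mem_univ, true_and, Set.mem_setOf_eq, Finset.mem_coe] at hx ⊢; exact hx)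
      show (Finset.univ.filter (fun j => sc j ≤ m)).card = _
      rw [h]
      apply Finset.sum_congr rfl
      intro i hi
      simp only [Finset.mem_filter, Finset.mem_univ, true_and] at hi
      congr 1
      ext j
      simp only [Finset.mem_filter, Finset.mem_univ, true_and]
      constructor
      · rintro ⟨-, h2⟩; exact h2
      · intro h2; exact ⟨h2 ▸ hi, h2⟩
    simp only [hp]
    rw [← Finset.sum_div]
    congr 1
    rw [hcard]
    push_cast
    rfl
  -- characterization of the membership condition
  have hmem : ∀ m : Fin M,
      (1 - α ≤ ∑ i ∈ Finset.univ.filter (· ≤ m), pPlus i) ↔ k ≤ D m := by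
    intro m
    have hind : ∑ i ∈ Finset.univ.filter (· ≤ m),
        (if ((i : Fin M) : ℕ) = M - 1 then 1/((N:ℝ)+1) else 0)
        = if m = lst then 1/((N:ℝ)+1) else 0 := by
      have hcond : ∀ i : Fin M, (((i : Fin M) : ℕ) = M - 1) = (i = lst) := by
        intro i; simp [hlst, Fin.ext_iff]
      simp only [hcond]
      rw [Finset.sum_ite_eq' (Finset.univ.filter (· ≤ m)) lst
        (fun _ => 1/((N:ℝ)+1))]
      congr 1
      simp only [Finset.mem_filter, Finset.mem_univ, true_and, eq_iff_iff]
      constructor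
      · intro h; exact le_antisymm (hle_lst m) h
      · intro h; exact h ▸ le_refl _
    have hsum : ∑ i ∈ Finset.univ.filter (· ≤ m), pPlus i
        = ((D m : ℝ)) / ((N:ℝ)+1) := by
      simp only [hpPlus]
      rw [Finset.sum_add_distrib, ← Finset.mul_sum, hsum_p, hind]
      rw [hD]
      show (N:ℝ)/((N:ℝ)+1) * ((C m : ℝ)/N) + _
        = ((C m + if m = lst then 1 else 0 : ℕ) : ℝ)/((N:ℝ)+1)
      split_ifs <;> push_cast <;> field_simp <;> ring
    rw [hsum, le_div_iff₀ hN1]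
    rw [show ((D m : ℕ) : ℝ) = (((D m : ℕ) : ℤ) : ℝ) by push_cast; rfl]
    rw [← Int.ceil_le, hkdef]
    exact_mod_cast Int.toNat_le.symm
  -- the sorted list of scores
  set ls : List (Fin M) := (Finset.univ.val.map sc).sort (· ≤ ·) with hls
  have hls_sorted : List.Pairwise (· ≤ ·) ls := Multiset.pairwise_sort _ _
  have hls_len : ls.length = N := by
    simp [hls]
  -- target list equals map of ls
  have hmapL : ((Finset.univ.val.map (fun i : Fin N => L (sc i))).sort (· ≤ ·))
      = ls.map L := by
    refine List.Perm.eq_of_pairwise' (r := (· ≤ ·)) ?_ ?_ ?_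
    rotate_right
    · rw [← Multiset.coe_eq_coe, Multiset.sort_eq, ← Multiset.map_coe,
        Multiset.sort_eq, Multiset.map_map]
      rfl
    · exact Multiset.pairwise_sort _ _
    · exact List.Pairwise.map L (fun a b h => hL.monotone h) hls_sorted
  have hjlen : k - 1 < ls.length := by omega
  set m0 : Fin M := ls.get ⟨k - 1, hjlen⟩ with hm0
  -- counting in the list
  have hcount : ∀ m : Fin M,
      List.countP (fun x => decide (x ≤ m)) ls = C m := by
    intro m
    have h1 : (↑ls : Multiset (Fin M)) = Finset.univ.val.map sc :=
      Multiset.sort_eq _ _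
    have h2 := Multiset.coe_countP (fun x : Fin M => x ≤ m) ls
    rw [h1, Multiset.countP_map] at h2
    rw [← h2]
    show Multiset.card _ = (Finset.univ.filter (fun i => sc i ≤ m)).card
    rw [Finset.card_def, Finset.filter_val]
  -- lower bound on count at m0
  have hA : k ≤ C m0 := by
    rw [← hcount m0]
    have htake : List.countP (fun x => decide (x ≤ m0)) (ls.take k) = k := by
      have hlen : (ls.take k).length = k := by rw [List.length_take]; omega
      have hall : List.countP (fun x => decide (x ≤ m0)) (ls.take k)
          = (ls.take k).length := by
        apply List.countP_eq_length.mpr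
        intro a ha
        rw [List.mem_iff_getElem] at ha
        obtain ⟨i, hi, rfl⟩ := ha
        rw [List.getElem_take]
        simp only [decide_eq_true_eq]
        have hi' : i < ls.length := by
          rw [List.length_take] at hi; omega
        have : ls.get ⟨i, hi'⟩ ≤ ls.get ⟨k - 1, hjlen⟩ := by
          apply hls_sorted.rel_get_of_le
          simp only [Fin.mk_le_mk]
          rw [List.length_take] at hi; omega
        exact this
      rw [hall, hlen]
    calc k = List.countP (fun x => decide (x ≤ m0)) (ls.take k) := htake.symm
      _ ≤ List.countP (fun x => decide (x ≤ m0)) ls :=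
        (List.take_sublist k ls).countP_le
  -- upper bound: below m0
  have hB : ∀ m : Fin M, m < m0 → C m ≤ k - 1 := by
    intro m hlt
    rw [← hcount m]
    have h0 : List.countP (fun x => decide (x ≤ m)) (ls.drop (k - 1)) = 0 := by
      rw [List.countP_eq_zero]
      intro a ha
      rw [List.mem_iff_getElem] at ha
      obtain ⟨i, hi, rfl⟩ := ha
      simp only [decide_eq_true_eq, not_le]
      have hi' : k - 1 + i < ls.length := by
        rw [List.length_drop] at hi; omega
      rw [List.getElem_drop]
      calc m < m0 := hlt
        _ ≤ ls.get ⟨k - 1 + i, hi'⟩ := by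
          apply hls_sorted.rel_get_of_le
          simp only [Fin.mk_le_mk]; omega
    calc List.countP (fun x => decide (x ≤ m)) ls
        = List.countP (fun x => decide (x ≤ m)) (ls.take (k-1))
          + List.countP (fun x => decide (x ≤ m)) (ls.drop (k-1)) := by
          conv_lhs => rw [← List.take_append_drop (k-1) ls]
          rw [List.countP_append]
      _ ≤ (ls.take (k-1)).length + 0 := by
          rw [h0]; exact Nat.add_le_add List.countP_le_length le_rfl
      _ ≤ k - 1 := by rw [List.length_take]; omega
  have hm0_eq : m0 = mα := by
    have h1 : mα ≤ m0 := hmα.2 ((hmem m0).mpr (by simp only [hD]; omega))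
    have h2 : ¬ (mα < m0) := by
      intro hlt
      have hCmα : C mα ≤ k - 1 := hB mα hlt
      have hkD : k ≤ D mα := (hmem mα).mp hmα.1
      have hne : mα ≠ lst := by
        intro h
        exact absurd (h ▸ hlt) (not_lt.mpr (hle_lst m0))
      simp only [hD, if_neg hne] at hkD
      omega
    exact le_antisymm (not_lt.mp h2) h1
  rw [hmapL]
  have hjlen' : k - 1 < (ls.map L).length := by simpa using hjlen
  rw [List.getD_eq_getElem _ _ hjlen', List.getElem_map]
  rw [show ls[k-1] = m0 from rfl, hm0_eq]
end
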